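/- Let α ∈ (0,1) and define the anyon entropy density s : (0, 1/α) → ℝ by s(f) = f·log f + (1/α − f)·log((1−αf)^α) − (1/(1−α) + f)·log((1+(1−α)f)^{1−α}). Then s is differentiable on (0, 1/α) with s'(f) = log( f / F(f) ), where F(f) = (1−αf)^α (1+(1−α)f)^{1−α}. In particular s'(f) = 0 exactly when f/F(f) = 1. -/

import Mathlib

noncomputable section

/-- The anyon filling factor `F(f) = (1−αf)^α (1+(1−α)f)^{1−α}`. -/
def fillingFactor (α f : ℝ) : ℝ :=
  (1 - α * f) ^ α * (1 + (1 - α) * f) ^ (1 - α)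

/-- The anyon entropy density
`s(f) = f log f + (1/α − f) log((1−αf)^α) − (1/(1−α) + f) log((1+(1−α)f)^{1−α})`. -/
def anyonEntropyDensity (α f : ℝ) : ℝ :=
  f * Real.log f + (1 / α - f) * Real.log ((1 - α * f) ^ α)
    - (1 / (1 - α) + f) * Real.log ((1 + (1 - α) * f) ^ (1 - α))

/-- on `(0, 1/α)` the anyon entropy density is differentiable with
derivative `log(f/F(f))`; in particular the derivative vanishes exactly when
`f/F(f) = 1`. -/
theorem anyonEntropyDensity_hasDerivAt
    (α : ℝ) (hα : α ∈ Set.Ioo (0 : ℝ) 1) :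
    ∀ f ∈ Set.Ioo (0 : ℝ) (1 / α),
      HasDerivAt (anyonEntropyDensity α) (Real.log (f / fillingFactor α f)) f
      ∧ (Real.log (f / fillingFactor α f) = 0 ↔ f / fillingFactor α f = 1) := by
  obtain ⟨hα0, hα1⟩ := hα
  intro f hf
  obtain ⟨hf0, hfα⟩ := hf
  have h1 : 0 < 1 - α * f := by
    have : f * α < 1 := (lt_div_iff₀ hα0).mp hfα
    nlinarith
  have h2 : 0 < 1 + (1 - α) * f := by nlinarith
  have hF : 0 < fillingFactor α f := by
    unfold fillingFactor
    positivity
  have hx : 0 < f / fillingFactor α f := div_pos hf0 hF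
  have hlogF : Real.log (fillingFactor α f)
      = α * Real.log (1 - α * f) + (1 - α) * Real.log (1 + (1 - α) * f) := by
    unfold fillingFactor
    rw [Real.log_mul (by positivity) (by positivity), Real.log_rpow h1, Real.log_rpow h2]
  have key : Real.log (f / fillingFactor α f)
      = Real.log f - α * Real.log (1 - α * f) - (1 - α) * Real.log (1 + (1 - α) * f) := by
    rw [Real.log_div (ne_of_gt hf0) (ne_of_gt hF), hlogF]; ring
  refine ⟨?_, ?_⟩
  · -- the derivative
    have hd1 : HasDerivAt (fun x : ℝ => x * Real.log x) (Real.log f + 1) f :=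
      Real.hasDerivAt_mul_log (ne_of_gt hf0)
    have hi1 : HasDerivAt (fun x : ℝ => 1 - α * x) (-α) f := by
      simpa using ((hasDerivAt_id f).const_mul α).const_sub 1
    have hi2 : HasDerivAt (fun x : ℝ => 1 + (1 - α) * x) (1 - α) f := by
      simpa using ((hasDerivAt_id f).const_mul (1 - α)).const_add 1
    have hl1 : HasDerivAt (fun x : ℝ => Real.log (1 - α * x)) ((1 - α * f)⁻¹ * (-α)) f :=
      by have := (Real.hasDerivAt_log (ne_of_gt h1)).comp f hi1; exact this
    have hl2 : HasDerivAt (fun x : ℝ => Real.log (1 + (1 - α) * x))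
        ((1 + (1 - α) * f)⁻¹ * (1 - α)) f :=
      by have := (Real.hasDerivAt_log (ne_of_gt h2)).comp f hi2; exact this
    have hu1 : HasDerivAt (fun x : ℝ => 1 / α - x) (-1) f := by
      simpa using (hasDerivAt_id f).const_sub (1 / α)
    have hu2 : HasDerivAt (fun x : ℝ => 1 / (1 - α) + x) 1 f := by
      simpa using (hasDerivAt_id f).const_add (1 / (1 - α))
    have hd2 : HasDerivAt (fun x : ℝ => (1 / α - x) * (α * Real.log (1 - α * x)))
        ((-1) * (α * Real.log (1 - α * f)) + (1 / α - f) * (α * ((1 - α * f)⁻¹ * (-α)))) f :=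
      hu1.mul (hl1.const_mul α)
    have hd3 : HasDerivAt (fun x : ℝ => (1 / (1 - α) + x) * ((1 - α) * Real.log (1 + (1 - α) * x)))
        (1 * ((1 - α) * Real.log (1 + (1 - α) * f))
          + (1 / (1 - α) + f) * ((1 - α) * ((1 + (1 - α) * f)⁻¹ * (1 - α)))) f :=
      hu2.mul (hl2.const_mul (1 - α))
    have hg : HasDerivAt (fun x : ℝ => x * Real.log x + (1 / α - x) * (α * Real.log (1 - α * x))
        - (1 / (1 - α) + x) * ((1 - α) * Real.log (1 + (1 - α) * x)))
        ((Real.log f + 1)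
          + ((-1) * (α * Real.log (1 - α * f)) + (1 / α - f) * (α * ((1 - α * f)⁻¹ * (-α))))
          - (1 * ((1 - α) * Real.log (1 + (1 - α) * f))
            + (1 / (1 - α) + f) * ((1 - α) * ((1 + (1 - α) * f)⁻¹ * (1 - α))))) f :=
      (hd1.add hd2).sub hd3
    have hev : anyonEntropyDensity α =ᶠ[nhds f]
        (fun x : ℝ => x * Real.log x + (1 / α - x) * (α * Real.log (1 - α * x))
          - (1 / (1 - α) + x) * ((1 - α) * Real.log (1 + (1 - α) * x))) := by
      have hopen : IsOpen ({x : ℝ | 0 < 1 - α * x} ∩ {x : ℝ | 0 < 1 + (1 - α) * x}) :=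
        (isOpen_lt continuous_const (by continuity)).inter
          (isOpen_lt continuous_const (by continuity))
      filter_upwards [hopen.mem_nhds ⟨h1, h2⟩] with x hxm
      obtain ⟨hx1, hx2⟩ := hxm
      unfold anyonEntropyDensity
      rw [Real.log_rpow hx1, Real.log_rpow hx2]
    have hfinal := hg.congr_of_eventuallyEq hev
    refine hfinal.congr_deriv ?_
    rw [key]
    have hαne : α ≠ 0 := ne_of_gt hα0
    have hα1ne : 1 - α ≠ 0 := by linarith
    field_simp
    ring
  · constructor
    · intro h
      rcases Real.log_eq_zero.mp h with h' | h' | h' <;> linarith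
    · intro h
      rw [h, Real.log_one]

end
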